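/- For every complex number s with Re(s) > 0, there exists a unique complex number t = t(s) with Re(t) > Re(-s) satisfying λ·φ(s,t) = λ - (s+t), where φ(s,t) = E[e^{-sB¹ - tB²}] is the joint Laplace-Stieltjes transform of a pair of nonnegative random variables (B¹,B²) with P(B¹ ≥ B²) = 1 and P(B¹ > B²) > 0, and λ > 0. -/

import Mathlib

open MeasureTheory

set_option linter.unusedVariables false
set_option linter.unusedSectionVars false


lemma aux_mul_exp_le {r y : ℝ} (hr : 0 < r) (hy : 0 ≤ y) :
    Real.exp (-(r * y)) * y ≤ 1 / r := by
  have h := Real.add_one_le_exp (r * y)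
  have hfe : Real.exp (-(r*y)) * Real.exp (r*y) = 1 := by rw [← Real.exp_add]; simp
  have hf := Real.exp_pos (-(r*y))
  have key : r * (Real.exp (-(r*y)) * y) ≤ 1 := by nlinarith [mul_le_mul_of_nonneg_left h hf.le]
  rw [le_div_iff₀ hr]
  linarith [key]

lemma aux_xexp_le {x : ℝ} (hx : 0 ≤ x) : x * Real.exp (-x) ≤ 1 - Real.exp (-x) := by
  have h := Real.add_one_le_exp x
  have hfe : Real.exp (-x) * Real.exp x = 1 := by rw [← Real.exp_add]; simp
  have hf := Real.exp_pos (-x)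
  nlinarith [mul_le_mul_of_nonneg_left h hf.le]

lemma lipExp {ε y : ℝ} (hy : 0 ≤ y) {u v : ℂ} (hu : ε ≤ u.re) (hv : ε ≤ v.re) :
    ‖Complex.exp (-(u * y)) - Complex.exp (-(v * y))‖ ≤ Real.exp (-(ε * y)) * y * ‖u - v‖ := by
  have hconv : Convex ℝ {z : ℂ | ε ≤ z.re} := convex_halfSpace_re_ge ε
  have hder : ∀ z ∈ {z : ℂ | ε ≤ z.re}, HasDerivWithinAt (fun w => Complex.exp (-(w * y)))
      (Complex.exp (-(z * y)) * (-(y:ℂ))) {z : ℂ | ε ≤ z.re} z := by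
    intro z _
    have h1 : HasDerivAt (fun w : ℂ => -(w * (y:ℂ))) (-(y:ℂ)) z := by
      exact (hasDerivAt_mul_const (x := z) (y:ℂ)).neg
    exact h1.cexp.hasDerivWithinAt
  have hbound : ∀ z ∈ {z : ℂ | ε ≤ z.re}, ‖Complex.exp (-(z * y)) * (-(y:ℂ))‖ ≤ Real.exp (-(ε*y)) * y := by
    intro z hz
    rw [norm_mul, Complex.norm_exp]
    have h1 : (-(z * (y:ℂ))).re = -(z.re * y) := by simp
    rw [h1]
    have h2 : ‖(-(y:ℂ))‖ = y := by
      rw [norm_neg, Complex.norm_real, Real.norm_eq_abs, abs_of_nonneg hy]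
    rw [h2]
    have : Real.exp (-(z.re * y)) ≤ Real.exp (-(ε * y)) := by
      apply Real.exp_le_exp.2
      simp only [Set.mem_setOf_eq] at hz
      nlinarith [mul_le_mul_of_nonneg_right hz hy]
    nlinarith [Real.exp_pos (-(z.re*y)), Real.exp_pos (-(ε*y))]
  have := hconv.norm_image_sub_le_of_norm_hasDerivWithin_le hder hbound hv hu
  calc ‖Complex.exp (-(u * y)) - Complex.exp (-(v * y))‖ ≤ Real.exp (-(ε*y)) * y * ‖u - v‖ := this

section Aux
variable {Ω : Type*} [MeasurableSpace Ω] (μ : Measure Ω) [IsProbabilityMeasure μ]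
variable (X Y : Ω → ℝ)

noncomputable def cfun (a r : ℝ) : ℝ := ∫ ω, Real.exp (-(a * X ω) - r * Y ω) ∂μ
noncomputable def dfun (a r : ℝ) : ℝ := ∫ ω, Real.exp (-(a * X ω) - r * Y ω) * Y ω ∂μ
noncomputable def gfun (s u : ℂ) : ℂ := ∫ ω, Complex.exp (-(s * X ω) - u * Y ω) ∂μ

variable {μ X Y}

lemma auxMeasK (hXm : Measurable X) (hYm : Measurable Y) (a r : ℝ) :
    Measurable fun ω => Real.exp (-(a * X ω) - r * Y ω) :=
  ((hXm.const_mul a).neg.sub (hYm.const_mul r)).exp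

lemma auxIntK (hXm : Measurable X) (hYm : Measurable Y) (hX0 : ∀ᵐ ω ∂μ, 0 ≤ X ω)
    (hY0 : ∀ ω, 0 ≤ Y ω) {a r : ℝ} (ha : 0 ≤ a) (hr : 0 ≤ r) :
    Integrable (fun ω => Real.exp (-(a * X ω) - r * Y ω)) μ := by
  refine Integrable.mono' (integrable_const 1) (auxMeasK hXm hYm a r).aestronglyMeasurable ?_
  filter_upwards [hX0] with ω hX
  rw [Real.norm_eq_abs, abs_of_pos (Real.exp_pos _)]
  rw [Real.exp_le_one_iff]
  nlinarith [mul_nonneg ha hX, mul_nonneg hr (hY0 ω)]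

lemma auxIntKY (hXm : Measurable X) (hYm : Measurable Y) (hX0 : ∀ᵐ ω ∂μ, 0 ≤ X ω)
    (hY0 : ∀ ω, 0 ≤ Y ω) {a r : ℝ} (ha : 0 ≤ a) (hr : 0 < r) :
    Integrable (fun ω => Real.exp (-(a * X ω) - r * Y ω) * Y ω) μ := by
  refine Integrable.mono' (integrable_const (1/r)) ((auxMeasK hXm hYm a r).mul hYm).aestronglyMeasurable ?_
  filter_upwards [hX0] with ω hX
  rw [Real.norm_eq_abs, abs_of_nonneg (mul_nonneg (Real.exp_pos _).le (hY0 ω))]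
  have h1 : Real.exp (-(a * X ω) - r * Y ω) ≤ Real.exp (-(r * Y ω)) := by
    apply Real.exp_le_exp.2; nlinarith [mul_nonneg ha hX]
  have h2 : Real.exp (-(r * Y ω)) * Y ω ≤ 1 / r := aux_mul_exp_le hr (hY0 ω)
  calc Real.exp (-(a * X ω) - r * Y ω) * Y ω ≤ Real.exp (-(r * Y ω)) * Y ω :=
        mul_le_mul_of_nonneg_right h1 (hY0 ω)
    _ ≤ 1 / r := h2

lemma auxIntC (hXm : Measurable X) (hYm : Measurable Y) (hX0 : ∀ᵐ ω ∂μ, 0 ≤ X ω)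
    (hY0 : ∀ ω, 0 ≤ Y ω) {s u : ℂ} (hs : 0 ≤ s.re) (hu : 0 ≤ u.re) :
    Integrable (fun ω => Complex.exp (-(s * X ω) - u * Y ω)) μ := by
  have hm : Measurable fun ω => Complex.exp (-(s * X ω) - u * Y ω) := by
    apply Complex.measurable_exp.comp
    exact (((Complex.measurable_ofReal.comp hXm).const_mul s).neg.sub
      ((Complex.measurable_ofReal.comp hYm).const_mul u))
  refine Integrable.mono' (integrable_const 1) hm.aestronglyMeasurable ?_
  filter_upwards [hX0] with ω hX
  rw [Complex.norm_exp, Real.exp_le_one_iff]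
  have : (-(s * (X ω:ℂ)) - u * (Y ω:ℂ)).re = -(s.re * X ω) - u.re * Y ω := by simp
  rw [this]
  nlinarith [mul_nonneg hs hX, mul_nonneg hu (hY0 ω)]

lemma cfun_nonneg (a r : ℝ) : 0 ≤ cfun μ X Y a r :=
  integral_nonneg fun ω => (Real.exp_pos _).le

lemma dfun_nonneg (hY0 : ∀ ω, 0 ≤ Y ω) (a r : ℝ) : 0 ≤ dfun μ X Y a r :=
  integral_nonneg fun ω => mul_nonneg (Real.exp_pos _).le (hY0 ω)

lemma cfun_anti (hXm : Measurable X) (hYm : Measurable Y) (hX0 : ∀ᵐ ω ∂μ, 0 ≤ X ω)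
    (hY0 : ∀ ω, 0 ≤ Y ω) {a r₁ r₂ : ℝ} (ha : 0 ≤ a) (hr1 : 0 ≤ r₁) (h12 : r₁ ≤ r₂) :
    cfun μ X Y a r₂ ≤ cfun μ X Y a r₁ := by
  refine integral_mono (auxIntK hXm hYm hX0 hY0 ha (hr1.trans h12))
    (auxIntK hXm hYm hX0 hY0 ha hr1) fun ω => ?_
  apply Real.exp_le_exp.2
  nlinarith [mul_le_mul_of_nonneg_right h12 (hY0 ω)]

lemma cfun_lt_one (hXm : Measurable X) (hYm : Measurable Y) (hX0 : ∀ᵐ ω ∂μ, 0 ≤ X ω)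
    (hY0 : ∀ ω, 0 ≤ Y ω) {a : ℝ} (ha : 0 < a) (hsupp : 0 < μ {ω | 0 < X ω}) :
    cfun μ X Y a 0 < 1 := by
  have hK := auxIntK hXm hYm hX0 hY0 ha.le (le_refl (0:ℝ))
  have h1 : (0:ℝ) < ∫ ω, (1 - Real.exp (-(a * X ω) - 0 * Y ω)) ∂μ := by
    rw [integral_pos_iff_support_of_nonneg_ae]
    · refine lt_of_lt_of_le hsupp (measure_mono ?_)
      intro ω hω
      simp only [Set.mem_setOf_eq] at hω
      simp only [Function.mem_support]
      have : Real.exp (-(a * X ω) - 0 * Y ω) < 1 := by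
        rw [Real.exp_lt_one_iff]; nlinarith [mul_pos ha hω]
      intro hcon
      nlinarith
    · filter_upwards [hX0] with ω hX
      simp only [Pi.zero_apply, sub_nonneg]
      rw [Real.exp_le_one_iff]
      nlinarith [mul_nonneg ha.le hX, mul_nonneg (le_refl (0:ℝ)) (hY0 ω)]
    · exact (integrable_const 1).sub hK
  have h2 : ∫ ω, (1 - Real.exp (-(a * X ω) - 0 * Y ω)) ∂μ = 1 - cfun μ X Y a 0 := by
    rw [integral_sub (integrable_const 1) hK]
    simp [cfun]
  rw [h2] at h1
  linarith

lemma re_gfun_le (hXm : Measurable X) (hYm : Measurable Y) (hX0 : ∀ᵐ ω ∂μ, 0 ≤ X ω)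
    (hY0 : ∀ ω, 0 ≤ Y ω) {s u : ℂ} (hs : 0 ≤ s.re) (hu : 0 ≤ u.re) :
    (gfun μ X Y s u).re ≤ cfun μ X Y s.re u.re := by
  have hInt := auxIntC hXm hYm hX0 hY0 hs hu
  have h1 : (gfun μ X Y s u).re = ∫ ω, (Complex.exp (-(s * X ω) - u * Y ω)).re ∂μ := by
    have := Complex.reCLM.integral_comp_comm hInt
    simp only [Complex.reCLM_apply] at this
    rw [gfun, ← this]
  rw [h1]
  refine integral_mono hInt.re (auxIntK hXm hYm hX0 hY0 hs hu) fun ω => ?_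
  calc (Complex.exp (-(s * X ω) - u * Y ω)).re
      ≤ ‖Complex.exp (-(s * X ω) - u * Y ω)‖ := Complex.re_le_norm _
    _ = Real.exp (-(s.re * X ω) - u.re * Y ω) := by
        rw [Complex.norm_exp]; congr 1; simp

lemma norm_gfun_sub (hXm : Measurable X) (hYm : Measurable Y) (hX0 : ∀ᵐ ω ∂μ, 0 ≤ X ω)
    (hY0 : ∀ ω, 0 ≤ Y ω) {s : ℂ} (hs : 0 ≤ s.re) {ε : ℝ} (hε : 0 < ε) {u v : ℂ}
    (hu : ε ≤ u.re) (hv : ε ≤ v.re) :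
    ‖gfun μ X Y s u - gfun μ X Y s v‖ ≤ dfun μ X Y s.re ε * ‖u - v‖ := by
  have hIu := auxIntC hXm hYm hX0 hY0 hs (hε.le.trans hu)
  have hIv := auxIntC hXm hYm hX0 hY0 hs (hε.le.trans hv)
  rw [gfun, gfun, ← integral_sub hIu hIv]
  rw [show dfun μ X Y s.re ε * ‖u - v‖
      = ∫ ω, Real.exp (-(s.re * X ω) - ε * Y ω) * Y ω * ‖u - v‖ ∂μ by
    rw [dfun, ← integral_mul_const]]
  refine norm_integral_le_of_norm_le
    ((auxIntKY hXm hYm hX0 hY0 hs hε).mul_const ‖u - v‖) ?_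
  filter_upwards with ω
  have hfac : ∀ w : ℂ, Complex.exp (-(s * X ω) - w * Y ω)
      = Complex.exp (-(s * X ω)) * Complex.exp (-(w * Y ω)) := by
    intro w; rw [← Complex.exp_add]; ring_nf
  rw [hfac u, hfac v, ← mul_sub, norm_mul]
  have h1 : ‖Complex.exp (-(s * (X ω:ℂ)))‖ = Real.exp (-(s.re * X ω)) := by
    rw [Complex.norm_exp]; congr 1; simp
  rw [h1]
  have h2 := lipExp (hY0 ω) hu hv
  calc Real.exp (-(s.re * X ω)) * ‖Complex.exp (-(u * Y ω)) - Complex.exp (-(v * Y ω))‖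
      ≤ Real.exp (-(s.re * X ω)) * (Real.exp (-(ε * Y ω)) * Y ω * ‖u - v‖) :=
        mul_le_mul_of_nonneg_left h2 (Real.exp_pos _).le
    _ = Real.exp (-(s.re * X ω) - ε * Y ω) * Y ω * ‖u - v‖ := by
        rw [Real.exp_sub, Real.exp_neg (ε * Y ω)]
        field_simp

lemma key_lt (hXm : Measurable X) (hYm : Measurable Y) (hX0 : ∀ᵐ ω ∂μ, 0 ≤ X ω)
    (hY0 : ∀ ω, 0 ≤ Y ω) {a : ℝ} (ha : 0 < a) (hsupp : 0 < μ {ω | 0 < X ω})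
    {lam ε : ℝ} (hlam : 0 < lam) (hε : 0 < ε)
    (hεψ : lam * (1 - cfun μ X Y a ε) ≤ ε) :
    lam * dfun μ X Y a ε < 1 := by
  have hptw : ∀ ω, ε * (Real.exp (-(a * X ω) - ε * Y ω) * Y ω)
      ≤ Real.exp (-(a * X ω) - 0 * Y ω) - Real.exp (-(a * X ω) - ε * Y ω) := by
    intro ω
    have e1 : Real.exp (-(a * X ω) - ε * Y ω)
        = Real.exp (-(a * X ω)) * Real.exp (-(ε * Y ω)) := by
      rw [← Real.exp_add]; ring_nf
    have e0 : Real.exp (-(a * X ω) - 0 * Y ω) = Real.exp (-(a * X ω)) := by norm_num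
    have h := aux_xexp_le (mul_nonneg hε.le (hY0 ω))
    have hp := (Real.exp_pos (-(a * X ω))).le
    rw [e1, e0]
    nlinarith [mul_le_mul_of_nonneg_left h hp]
  have h1 : ε * dfun μ X Y a ε ≤ cfun μ X Y a 0 - cfun μ X Y a ε := by
    have hi1 := auxIntKY hXm hYm hX0 hY0 ha.le hε
    have hi0 := auxIntK hXm hYm hX0 hY0 ha.le (le_refl (0:ℝ))
    have hiε := auxIntK hXm hYm hX0 hY0 ha.le hε.le
    calc ε * dfun μ X Y a ε
        = ∫ ω, ε * (Real.exp (-(a * X ω) - ε * Y ω) * Y ω) ∂μ := by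
          rw [dfun, integral_const_mul]
      _ ≤ ∫ ω, (Real.exp (-(a * X ω) - 0 * Y ω) - Real.exp (-(a * X ω) - ε * Y ω)) ∂μ :=
          integral_mono (hi1.const_mul ε) (hi0.sub hiε) hptw
      _ = cfun μ X Y a 0 - cfun μ X Y a ε := by rw [integral_sub hi0 hiε]; rfl
  have h3 : 0 < lam * (1 - cfun μ X Y a 0) :=
    mul_pos hlam (by linarith [cfun_lt_one hXm hYm hX0 hY0 ha hsupp])
  have h4 : lam * dfun μ X Y a ε * ε < 1 * ε := by nlinarith
  exact lt_of_mul_lt_mul_right h4 hε.le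

end Aux


/-- Rouché lemma (Lemma 1 in the paper): for every `s` with `Re s > 0` there is a unique
`t = t(s)` with `Re t > Re (-s)` satisfying `λ φ(s,t) = λ - (s+t)`, where
`φ(s,t) = E[exp (-s B¹ - t B²)]`, `B¹ ≥ B²` a.s. and `P(B¹ > B²) > 0`, `λ > 0`. -/
theorem stmt0 {Ω : Type*} [MeasurableSpace Ω] (μ : Measure Ω) [IsProbabilityMeasure μ]
    (B1 B2 : Ω → ℝ) (hB1m : Measurable B1) (hB2m : Measurable B2)
    (hB1 : ∀ ω, 0 ≤ B1 ω) (hB2 : ∀ ω, 0 ≤ B2 ω)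
    (hord : ∀ᵐ ω ∂μ, B2 ω ≤ B1 ω)
    (hstrict : 0 < μ {ω | B2 ω < B1 ω})
    (lam : ℝ) (hlam : 0 < lam)
    (φ : ℂ → ℂ → ℂ)
    (hφ : ∀ s t : ℂ, φ s t = ∫ ω, Complex.exp (-(s * B1 ω) - t * B2 ω) ∂μ)
    (s : ℂ) (hs : 0 < s.re) :
    ∃! t : ℂ, (-s).re < t.re ∧ (lam : ℂ) * φ s t = (lam : ℂ) - (s + t) := by
  classical
  set X : Ω → ℝ := fun ω => B1 ω - B2 ω with hXdef
  have hXm : Measurable X := hB1m.sub hB2m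
  have hX0 : ∀ᵐ ω ∂μ, 0 ≤ X ω := hord.mono fun ω h => by simp [hXdef]; linarith
  have hsupp : 0 < μ {ω | 0 < X ω} := by
    have hset : {ω | 0 < X ω} = {ω | B2 ω < B1 ω} := by
      ext ω; simp [hXdef, sub_pos]
    rw [hset]; exact hstrict
  -- relation between φ and gfun
  have hφg : ∀ t : ℂ, φ s t = gfun μ X B2 s (s + t) := by
    intro t
    rw [hφ, gfun]
    apply integral_congr_ae
    filter_upwards with ω
    congr 1
    simp only [hXdef]
    push_cast
    ring
  -- the monotone map ψ and its largest fixed point below lam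
  set ψ : ℝ → ℝ := fun r => lam * (1 - cfun μ X B2 s.re r) with hψdef
  have hψmono : ∀ {r₁ r₂ : ℝ}, 0 ≤ r₁ → r₁ ≤ r₂ → ψ r₁ ≤ ψ r₂ := by
    intro r₁ r₂ h1 h12
    have := cfun_anti hXm hB2m hX0 hB2 hs.le h1 h12
    simp only [hψdef]
    nlinarith
  have hψ0pos : 0 < ψ 0 := by
    have := cfun_lt_one hXm hB2m hX0 hB2 hs hsupp
    simp only [hψdef]; nlinarith
  have hψlam : ∀ r : ℝ, ψ r ≤ lam := by
    intro r
    have := cfun_nonneg (μ := μ) (X := X) (Y := B2) s.re r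
    simp only [hψdef]; nlinarith
  set T : Set ℝ := {r : ℝ | r ∈ Set.Icc (0:ℝ) lam ∧ r ≤ ψ r} with hTdef
  have h0T : (0:ℝ) ∈ T := ⟨⟨le_refl 0, hlam.le⟩, hψ0pos.le⟩
  have hTne : T.Nonempty := ⟨0, h0T⟩
  have hTbdd : BddAbove T := ⟨lam, fun r hr => hr.1.2⟩
  set rstar : ℝ := sSup T with hrdef
  have hr0 : 0 ≤ rstar := le_csSup hTbdd h0T
  have hrlam : rstar ≤ lam := csSup_le hTne fun r hr => hr.1.2
  have hrψ : rstar ≤ ψ rstar :=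
    csSup_le hTne fun r hr => hr.2.trans (hψmono hr.1.1 (le_csSup hTbdd hr))
  have hψr : ψ rstar ≤ rstar := by
    refine le_csSup hTbdd ?_
    exact ⟨⟨(hψ0pos.trans_le (hψmono le_rfl hr0)).le, hψlam _⟩, hψmono hr0 hrψ⟩
  have hfix : ψ rstar = rstar := le_antisymm hψr hrψ
  have hrpos : 0 < rstar := lt_of_lt_of_le (hψ0pos.trans_le (hψmono le_rfl hr0)) hψr
  -- lower bound for real part of any solution
  have hlow : ∀ u : ℂ, 0 < u.re → (lam:ℂ) * gfun μ X B2 s u = (lam:ℂ) - u →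
      lam * (1 - cfun μ X B2 s.re u.re) ≤ u.re := by
    intro u hupos hueq
    have huval : u = (lam:ℂ) - (lam:ℂ) * gfun μ X B2 s u := by linear_combination hueq
    have hre : u.re = lam - lam * (gfun μ X B2 s u).re := by
      conv_lhs => rw [huval]
      simp [Complex.sub_re, Complex.mul_re]
    have h7 := re_gfun_le hXm hB2m hX0 hB2 hs.le hupos.le
    nlinarith [mul_le_mul_of_nonneg_left h7 hlam.le]
  -- the contraction
  set S : Set ℂ := {u : ℂ | rstar ≤ u.re} with hSdef
  have hSc : IsComplete S := (isClosed_le continuous_const Complex.continuous_re).isComplete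
  set F : ℂ → ℂ := fun u => (lam:ℂ) - (lam:ℂ) * gfun μ X B2 s u with hFdef
  have hFre : ∀ u : ℂ, (F u).re = lam - lam * (gfun μ X B2 s u).re := by
    intro u; simp [hFdef, Complex.sub_re, Complex.mul_re]
  have hmaps : Set.MapsTo F S S := by
    intro u hu
    have huS : rstar ≤ u.re := hu
    have h7 := re_gfun_le hXm hB2m hX0 hB2 hs.le (hrpos.le.trans huS)
    have h8 := cfun_anti hXm hB2m hX0 hB2 hs.le hr0 huS
    show rstar ≤ (F u).re
    rw [hFre]
    have h9 : ψ rstar = lam * (1 - cfun μ X B2 s.re rstar) := rfl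
    nlinarith [mul_le_mul_of_nonneg_left (h7.trans h8) hlam.le, hfix]
  have hK1 : lam * dfun μ X B2 s.re rstar < 1 := by
    refine key_lt hXm hB2m hX0 hB2 hs hsupp hlam hrpos ?_
    have : ψ rstar ≤ rstar := hψr
    simpa [hψdef] using this
  have hK0 : 0 ≤ lam * dfun μ X B2 s.re rstar :=
    mul_nonneg hlam.le (dfun_nonneg hB2 _ _)
  have hFdist : ∀ u ∈ S, ∀ v ∈ S,
      dist (F u) (F v) ≤ (lam * dfun μ X B2 s.re rstar) * dist u v := by
    intro u hu v hv
    have hdiff : F u - F v = (lam:ℂ) * (gfun μ X B2 s v - gfun μ X B2 s u) := by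
      simp only [hFdef]; ring
    rw [dist_eq_norm, hdiff, norm_mul, Complex.norm_real, Real.norm_eq_abs,
      abs_of_pos hlam]
    have h10 := norm_gfun_sub hXm hB2m hX0 hB2 hs.le hrpos hv hu
    rw [dist_eq_norm]
    calc lam * ‖gfun μ X B2 s v - gfun μ X B2 s u‖
        ≤ lam * (dfun μ X B2 s.re rstar * ‖v - u‖) :=
          mul_le_mul_of_nonneg_left h10 hlam.le
      _ = lam * dfun μ X B2 s.re rstar * ‖u - v‖ := by rw [norm_sub_rev]; ring
  have hcontr : ContractingWith ⟨lam * dfun μ X B2 s.re rstar, hK0⟩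
      (hmaps.restrict F S S) := by
    constructor
    · exact_mod_cast hK1
    · apply LipschitzWith.of_dist_le_mul
      rintro ⟨x, hx⟩ ⟨y, hy⟩
      have : dist ((hmaps.restrict F S S) ⟨x, hx⟩) ((hmaps.restrict F S S) ⟨y, hy⟩)
          = dist (F x) (F y) := rfl
      rw [this]
      have hd : dist (⟨x, hx⟩ : S) (⟨y, hy⟩ : S) = dist x y := rfl
      rw [hd]
      exact hFdist x hx y hy
  have hlamS : (lam:ℂ) ∈ S := by
    show rstar ≤ (lam:ℂ).re
    simpa using hrlam
  obtain ⟨u0, hu0S, hu0fix, -, -⟩ :=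
    hcontr.exists_fixedPoint' hSc hmaps hlamS (edist_ne_top _ _)
  have hu0re : rstar ≤ u0.re := hu0S
  have hequ0 : (lam:ℂ) * gfun μ X B2 s u0 = (lam:ℂ) - u0 := by
    have h := hu0fix
    simp only [Function.IsFixedPt, hFdef] at h
    linear_combination -h
  refine ⟨u0 - s, ⟨?_, ?_⟩, ?_⟩
  · simp only [Complex.sub_re, Complex.neg_re]
    have : 0 < u0.re := hrpos.trans_le hu0re
    linarith
  · rw [hφg, show s + (u0 - s) = u0 from by ring]
    exact hequ0
  · rintro t' ⟨hre', heq'⟩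
    have hu're : 0 < (s + t').re := by
      simp only [Complex.add_re]
      simp only [Complex.neg_re] at hre'
      linarith
    have hgeq' : (lam:ℂ) * gfun μ X B2 s (s + t') = (lam:ℂ) - (s + t') := by
      rw [← hφg]; exact heq'
    set ε : ℝ := min (s + t').re u0.re with hεdef
    have hεpos : 0 < ε := lt_min hu're (hrpos.trans_le hu0re)
    have hεu' : ε ≤ (s + t').re := min_le_left _ _
    have hεu0 : ε ≤ u0.re := min_le_right _ _
    have hεψ : lam * (1 - cfun μ X B2 s.re ε) ≤ ε := by
      rcases min_cases (s + t').re u0.re with ⟨hmin, -⟩ | ⟨hmin, -⟩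
      · rw [hεdef, hmin]; exact hlow _ hu're hgeq'
      · rw [hεdef, hmin]; exact hlow _ (hrpos.trans_le hu0re) hequ0
    have hKε : lam * dfun μ X B2 s.re ε < 1 :=
      key_lt hXm hB2m hX0 hB2 hs hsupp hlam hεpos hεψ
    have hdiff : (s + t') - u0 = (lam:ℂ) * (gfun μ X B2 s u0 - gfun μ X B2 s (s + t')) := by
      linear_combination hgeq' - hequ0
    have hL : ‖(s + t') - u0‖ = lam * ‖gfun μ X B2 s u0 - gfun μ X B2 s (s + t')‖ := by
      rw [hdiff, norm_mul, Complex.norm_real, Real.norm_eq_abs, abs_of_pos hlam]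
    have h10 := norm_gfun_sub hXm hB2m hX0 hB2 hs.le hεpos hεu0 hεu'
    have hrev : ‖u0 - (s + t')‖ = ‖(s + t') - u0‖ := norm_sub_rev _ _
    have hnorm : ‖(s + t') - u0‖ ≤ lam * (dfun μ X B2 s.re ε * ‖(s + t') - u0‖) := by
      conv_lhs => rw [hL]
      have := mul_le_mul_of_nonneg_left h10 hlam.le
      rw [hrev] at this
      exact this
    have hzero : ‖(s + t') - u0‖ = 0 := by
      nlinarith [norm_nonneg ((s + t') - u0), hKε, hnorm]
    have : (s + t') - u0 = 0 := norm_eq_zero.mp hzero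
    have : s + t' = u0 := by linear_combination this
    linear_combination this
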